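/- Let Z be a standard normal random variable and for λ > 0 define q(λ) = E[tanh²(λ + √λ Z)]. Then q is a continuous, strictly increasing function of λ on (0,∞), with q(λ) → 0 as λ → 0⁺ and q(λ) → 1 as λ → ∞. -/

import Mathlib

open MeasureTheory ProbabilityTheory Real Filter
open scoped ENNReal NNReal

/-- The standard Gaussian measure on ℝ. -/
noncomputable def stdGaussian : Measure ℝ := gaussianReal 0 1

/-- `q l = E[tanh² (l + √l Z)]` for `Z ~ N(0,1)`. -/
noncomputable def qfun (l : ℝ) : ℝ :=
  ∫ z, Real.tanh (l + Real.sqrt l * z) ^ 2 ∂stdGaussian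

noncomputable def phi (z : ℝ) : ℝ := (Real.sqrt (2*Real.pi))⁻¹ * Real.exp (-(z^2)/2)

lemma phi_eq : gaussianPDFReal 0 1 = phi := by
  funext z
  simp [gaussianPDFReal, phi]

lemma phi_pos (z : ℝ) : 0 < phi z := by
  have := Real.pi_pos
  unfold phi
  positivity

lemma continuous_phi : Continuous phi := by
  unfold phi
  continuity

lemma hasDerivAt_phi (z : ℝ) : HasDerivAt phi (-(z * phi z)) z := by
  have h : HasDerivAt (fun z : ℝ => -(z^2)/2) (-z) z := by
    have := ((hasDerivAt_pow 2 z).neg).div_const 2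
    exact this.congr_deriv (by norm_num; ring)
  have := (h.exp).const_mul (Real.sqrt (2*Real.pi))⁻¹
  unfold phi
  exact this.congr_deriv (by ring)

lemma integral_stdGaussian (g : ℝ → ℝ) :
    ∫ z, g z ∂stdGaussian = ∫ z, g z * phi z := by
  rw [_root_.stdGaussian, gaussianReal_of_var_ne_zero 0 one_ne_zero]
  have h : gaussianPDF 0 1 = fun z => ((gaussianPDFReal 0 1 z).toNNReal : ℝ≥0∞) := by
    funext z; rfl
  rw [h]
  rw [integral_withDensity_eq_integral_smul ((measurable_gaussianPDFReal 0 1).real_toNNReal) g]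
  congr 1
  funext z
  rw [NNReal.smul_def, Real.coe_toNNReal _ (gaussianPDFReal_nonneg 0 1 z), phi_eq, smul_eq_mul]
  ring

lemma integrable_growth {f : ℝ → ℝ} (hf : AEStronglyMeasurable f volume) {C : ℝ}
    (h : ∀ z, |f z| ≤ C * (1 + |z|)) : Integrable (fun z => f z * phi z) := by
  have hexp : Integrable (fun z : ℝ => Real.exp (-(z^2)/2)) := by
    have := integrable_exp_neg_mul_sq (by norm_num : (0:ℝ) < 1/2)
    convert this using 2 with z
    ring_nf
  have habs : Integrable (fun z : ℝ => |z| * Real.exp (-(z^2)/2)) := by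
    have := (integrable_mul_exp_neg_mul_sq (by norm_num : (0:ℝ) < 1/2)).abs
    apply this.congr
    filter_upwards with z
    rw [abs_mul, abs_of_nonneg (Real.exp_nonneg _)]
    congr 2
    ring_nf
  have hdom : Integrable (fun z : ℝ => C * ((1 + |z|) * phi z)) := by
    apply Integrable.const_mul
    have : (fun z : ℝ => (1 + |z|) * phi z)
        = fun z => (Real.sqrt (2*Real.pi))⁻¹ * (Real.exp (-(z^2)/2) + |z| * Real.exp (-(z^2)/2)) := by
      funext z; unfold phi; ring
    rw [this]
    exact (hexp.add habs).const_mul _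
  apply Integrable.mono' hdom (hf.mul continuous_phi.aestronglyMeasurable)
  filter_upwards with z
  show ‖f z * phi z‖ ≤ _
  rw [norm_mul, Real.norm_eq_abs, Real.norm_eq_abs, abs_of_pos (phi_pos z)]
  calc |f z| * phi z ≤ (C * (1 + |z|)) * phi z := by
        exact mul_le_mul_of_nonneg_right (h z) (phi_pos z).le
    _ = C * ((1 + |z|) * phi z) := by ring

lemma myHasDerivAt_tanh (x : ℝ) : HasDerivAt Real.tanh (1 - Real.tanh x ^ 2) x := by
  have h : Real.tanh = fun x => Real.sinh x / Real.cosh x := funext fun x => Real.tanh_eq_sinh_div_cosh x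
  rw [h]
  have := (Real.hasDerivAt_sinh x).div (Real.hasDerivAt_cosh x) (Real.cosh_pos x).ne'
  refine this.congr_deriv ?_
  have h1 := Real.cosh_sq_sub_sinh_sq x
  have h2 := (Real.cosh_pos x).ne'
  field_simp

lemma tanh_lt_one (x : ℝ) : Real.tanh x < 1 := by
  rw [Real.tanh_eq_sinh_div_cosh, div_lt_one (Real.cosh_pos x)]
  nlinarith [Real.cosh_sub_sinh x, Real.exp_pos (-x)]

lemma neg_one_lt_tanh (x : ℝ) : -1 < Real.tanh x := by
  rw [Real.tanh_eq_sinh_div_cosh, lt_div_iff₀ (Real.cosh_pos x)]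
  nlinarith [Real.cosh_add_sinh x, Real.exp_pos x]

lemma abs_tanh_le_one (x : ℝ) : |Real.tanh x| ≤ 1 :=
  abs_le.2 ⟨(_root_.neg_one_lt_tanh x).le, (_root_.tanh_lt_one x).le⟩

lemma tanh_eq_exp (x : ℝ) : Real.tanh x = (Real.exp (2*x) - 1) / (Real.exp (2*x) + 1) := by
  have h : Real.exp (2*x) = Real.exp x * Real.exp x := by rw [← Real.exp_add]; ring_nf
  rw [Real.tanh_eq_sinh_div_cosh, Real.sinh_eq, Real.cosh_eq, h]
  have h1 : Real.exp x > 0 := Real.exp_pos x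
  have h2 : Real.exp (-x) = (Real.exp x)⁻¹ := Real.exp_neg x
  rw [h2]
  field_simp

lemma tanh_eq_one_sub (x : ℝ) : Real.tanh x = 1 - 2/(Real.exp (2*x)+1) := by
  rw [tanh_eq_exp]
  have h1 : Real.exp (2*x) + 1 > 0 := by positivity
  field_simp
  ring

lemma one_add_tanh_mul (x : ℝ) : (1 + Real.tanh x) * Real.exp (-(2*x)) = 1 - Real.tanh x := by
  have h1 : Real.exp (2*x) > 0 := Real.exp_pos _
  have h2 : Real.exp (-(2*x)) = (Real.exp (2*x))⁻¹ := Real.exp_neg _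
  rw [tanh_eq_exp, h2]
  field_simp
  ring

lemma tendsto_tanh_atTop : Tendsto Real.tanh atTop (nhds 1) := by
  have h : Real.tanh = fun x => 1 - 2/(Real.exp (2*x)+1) := funext tanh_eq_one_sub
  rw [h]
  have h2 : Tendsto (fun x : ℝ => Real.exp (2*x) + 1) atTop atTop :=
    (Real.tendsto_exp_atTop.comp (tendsto_id.const_mul_atTop two_pos)).atTop_add tendsto_const_nhds
  have h3 : Tendsto (fun x : ℝ => 2/(Real.exp (2*x)+1)) atTop (nhds 0) :=
    tendsto_const_nhds.div_atTop h2
  simpa using tendsto_const_nhds.sub h3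

-- Symmetry (Nishimori-type) change-of-variables identity
lemma symmetry_lemma (l : ℝ) (hl : 0 < l) (h : ℝ → ℝ) :
    ∫ z, h (-(l + Real.sqrt l * z)) * Real.exp (-(2*(l + Real.sqrt l * z))) * phi z
      = ∫ z, h (l + Real.sqrt l * z) * phi z := by
  set S := Real.sqrt l with hS
  have hSS : S * S = l := Real.mul_self_sqrt hl.le
  have step1 : ∫ z, h (-(l + S * z)) * Real.exp (-(2*(l + S * z))) * phi z
      = ∫ z, h (-(l + S * (z - 2*S))) * Real.exp (-(2*(l + S * (z - 2*S)))) * phi (z - 2*S) := by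
    exact (integral_sub_right_eq_self (fun z => h (-(l + S * z)) * Real.exp (-(2*(l + S * z))) * phi z) (2*S)).symm
  rw [step1]
  have step2 : ∀ z, h (-(l + S * (z - 2*S))) * Real.exp (-(2*(l + S * (z - 2*S)))) * phi (z - 2*S)
      = h (l - S * z) * phi z := by
    intro z
    have h1 : -(l + S * (z - 2*S)) = l - S * z := by nlinarith [hSS]
    have h2 : Real.exp (-(2*(l + S * (z - 2*S)))) * phi (z - 2*S) = phi z := by
      unfold phi
      rw [mul_comm (Real.exp _), mul_assoc, ← Real.exp_add]
      congr 2
      nlinarith [hSS]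
    rw [h1, mul_assoc, h2]
  rw [integral_congr_ae (Filter.Eventually.of_forall step2)]
  have step3 : ∫ z, h (l - S * z) * phi z = ∫ z, h (l + S * z) * phi z := by
    rw [← integral_neg_eq_self (fun z => h (l + S * z) * phi z)]
    congr 1
    funext z
    have h1 : phi (-z) = phi z := by unfold phi; norm_num
    have h2 : l + S * -z = l - S * z := by ring
    rw [h1, h2]
  exact step3

noncomputable def hodd (t : ℝ) : ℝ := 2 * Real.tanh t * (1 - Real.tanh t)^2 * (1 + Real.tanh t)

lemma hodd_identity (x : ℝ) : hodd (-x) * Real.exp (-(2*x)) = - hodd x := by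
  unfold hodd
  rw [Real.tanh_neg]
  linear_combination (-(2*Real.tanh x*(1+Real.tanh x)*(1-Real.tanh x))) * one_add_tanh_mul x

lemma odd_vanish (l : ℝ) (hl : 0 < l) :
    ∫ z, hodd (l + Real.sqrt l * z) * phi z = 0 := by
  have hsym := symmetry_lemma l hl hodd
  have hcong : ∀ z : ℝ, hodd (-(l + Real.sqrt l * z)) * Real.exp (-(2*(l + Real.sqrt l * z))) * phi z
      = -(hodd (l + Real.sqrt l * z) * phi z) := by
    intro z
    rw [hodd_identity]
    ring
  rw [integral_congr_ae (Filter.Eventually.of_forall hcong), integral_neg] at hsym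
  linarith [hsym]

lemma continuous_of_hasDerivAt {u u' : ℝ → ℝ} (hu : ∀ z, HasDerivAt u (u' z) z) : Continuous u :=
  continuous_iff_continuousAt.2 fun z => (hu z).continuousAt

lemma stein {u u' : ℝ → ℝ} (hu : ∀ z, HasDerivAt u (u' z) z) (hu'c : Continuous u')
    {B : ℝ} (hB : ∀ z, |u z| ≤ B) {B' : ℝ} (hB' : ∀ z, |u' z| ≤ B' * (1 + |z|)) :
    ∫ z, z * u z * phi z = ∫ z, u' z * phi z := by
  have hBnn : 0 ≤ B := le_trans (abs_nonneg _) (hB 0)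
  have hucont : Continuous u := continuous_of_hasDerivAt hu
  have hint1 : Integrable (u * fun z => -(z * phi z)) := by
    have : Integrable (fun z => (u z * -z) * phi z) := by
      apply integrable_growth ((hucont.mul continuous_neg).aestronglyMeasurable) (C := B)
      intro z
      show |u z * -z| ≤ B * (1 + |z|)
      rw [abs_mul, abs_neg]
      calc |u z| * |z| ≤ B * |z| := mul_le_mul_of_nonneg_right (hB z) (abs_nonneg z)
        _ ≤ B * (1 + |z|) := by nlinarith [abs_nonneg z]
    apply this.congr
    filter_upwards with z
    show (u z * -z) * phi z = u z * -(z * phi z)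
    ring
  have hint2 : Integrable (u' * phi) := by
    have : Integrable (fun z => u' z * phi z) :=
      integrable_growth hu'c.aestronglyMeasurable hB'
    exact this.congr (by filter_upwards with z; rfl)
  have hint3 : Integrable (u * phi) := by
    have : Integrable (fun z => u z * phi z) := by
      apply integrable_growth hucont.aestronglyMeasurable (C := B)
      intro z
      nlinarith [abs_nonneg z, hB z, abs_nonneg (u z)]
    exact this.congr (by filter_upwards with z; rfl)
  have key := integral_mul_deriv_eq_deriv_mul_of_integrable (fun z _ => hu z) (fun z _ => hasDerivAt_phi z) hint1 hint2 hint3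
  have lhs : ∫ z, u z * -(z * phi z) = - ∫ z, z * u z * phi z := by
    rw [← integral_neg]
    congr 1; funext z; ring
  rw [lhs] at key
  have : ∫ z, u' z * phi z = ∫ z, u' z * phi z := rfl
  linarith [key]

lemma continuous_tanh' : Continuous Real.tanh :=
  continuous_of_hasDerivAt myHasDerivAt_tanh

lemma qfun_eq (l : ℝ) : qfun l = ∫ z, Real.tanh (l + Real.sqrt l * z) ^ 2 * phi z :=
  integral_stdGaussian _

lemma tanh_sq_le_one (x : ℝ) : Real.tanh x ^ 2 ≤ 1 := by
  nlinarith [_root_.tanh_lt_one x, _root_.neg_one_lt_tanh x]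

lemma abs_deriv_factor (t : ℝ) : |2 * Real.tanh t * (1 - Real.tanh t ^ 2)| ≤ 2 := by
  have h1 := abs_tanh_le_one t
  have h2 := tanh_sq_le_one t
  have h3 : (0:ℝ) ≤ 1 - Real.tanh t ^ 2 := by linarith
  rw [abs_mul, abs_of_nonneg h3, abs_mul]
  rw [abs_two]
  nlinarith [abs_nonneg (Real.tanh t)]

lemma hasDerivAt_inner (z : ℝ) {x : ℝ} (hx : 0 < x) :
    HasDerivAt (fun x => Real.tanh (x + Real.sqrt x * z) ^ 2 * phi z)
      ((2 * Real.tanh (x + Real.sqrt x * z) * (1 - Real.tanh (x + Real.sqrt x * z) ^ 2)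
        * (1 + z * (2 * Real.sqrt x)⁻¹)) * phi z) x := by
  have hsq := Real.hasDerivAt_sqrt hx.ne'
  have hinner : HasDerivAt (fun x : ℝ => x + Real.sqrt x * z) (1 + 1 / (2 * Real.sqrt x) * z) x :=
    (hasDerivAt_id x).add (hsq.mul_const z)
  have htanh := (myHasDerivAt_tanh (x + Real.sqrt x * z)).comp x hinner
  have hpow := htanh.pow 2
  have := hpow.mul_const (phi z)
  refine this.congr_deriv ?_
  simp only [Function.comp_apply, pow_one, Nat.cast_ofNat, one_div]
  ring

lemma hasDerivAt_qfun (l : ℝ) (hl : 0 < l) :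
    HasDerivAt qfun (∫ z, (2 * Real.tanh (l + Real.sqrt l * z)
      * (1 - Real.tanh (l + Real.sqrt l * z) ^ 2)
      * (1 + z * (2 * Real.sqrt l)⁻¹)) * phi z) l := by
  set c : ℝ := 2 * (Real.sqrt (l/2))⁻¹ with hc
  have hl2 : (0:ℝ) < l/2 := by linarith
  have hsql2 : 0 < Real.sqrt (l/2) := Real.sqrt_pos.2 hl2
  have hcnn : 0 ≤ c := by positivity
  have key := hasDerivAt_integral_of_dominated_loc_of_deriv_le (𝕜 := ℝ) (μ := volume)
    (F := fun x z => Real.tanh (x + Real.sqrt x * z) ^ 2 * phi z)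
    (F' := fun x z => (2 * Real.tanh (x + Real.sqrt x * z)
      * (1 - Real.tanh (x + Real.sqrt x * z) ^ 2) * (1 + z * (2 * Real.sqrt x)⁻¹)) * phi z)
    (x₀ := l) (bound := fun z => (2 + c * |z|) * phi z) (s := Metric.ball l (l/2)) (Metric.ball_mem_nhds l hl2)
    ?_ ?_ ?_ ?_ ?_ ?_
  · have heq : qfun = fun x => ∫ z, Real.tanh (x + Real.sqrt x * z) ^ 2 * phi z :=
      funext qfun_eq
    rw [heq]
    exact key.2
  · filter_upwards with x
    apply Continuous.aestronglyMeasurable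
    have : Continuous fun z : ℝ => Real.tanh (x + Real.sqrt x * z) ^ 2 := by
      apply Continuous.pow
      exact continuous_tanh'.comp (continuous_const.add (continuous_const.mul continuous_id))
    exact this.mul continuous_phi
  · apply integrable_growth (C := 1)
    · apply Continuous.aestronglyMeasurable
      apply Continuous.pow
      exact continuous_tanh'.comp (continuous_const.add (continuous_const.mul continuous_id))
    · intro z
      rw [abs_of_nonneg (sq_nonneg _)]
      have := tanh_sq_le_one (l + Real.sqrt l * z)
      nlinarith [abs_nonneg z]
  · apply Continuous.aestronglyMeasurable
    apply Continuous.mul _ continuous_phi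
    apply Continuous.mul
    · apply Continuous.mul
      · exact continuous_const.mul (continuous_tanh'.comp
          (continuous_const.add (continuous_const.mul continuous_id)))
      · exact continuous_const.sub ((continuous_tanh'.comp
          (continuous_const.add (continuous_const.mul continuous_id))).pow 2)
    · exact continuous_const.add (continuous_id.mul continuous_const)
  · filter_upwards with z
    intro x hx
    rw [Metric.mem_ball, Real.dist_eq] at hx
    have hxpos : l/2 < x := by have h' := abs_lt.1 hx; linarith [h'.1, h'.2]
    have hx0 : 0 < x := lt_trans hl2 hxpos
    have hsx : Real.sqrt (l/2) ≤ Real.sqrt x := Real.sqrt_le_sqrt hxpos.le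
    have hsxpos : 0 < Real.sqrt x := Real.sqrt_pos.2 hx0
    rw [norm_mul, Real.norm_eq_abs, Real.norm_eq_abs, abs_of_pos (phi_pos z)]
    apply mul_le_mul_of_nonneg_right _ (phi_pos z).le
    rw [abs_mul]
    calc |2 * Real.tanh (x + Real.sqrt x * z) * (1 - Real.tanh (x + Real.sqrt x * z) ^ 2)|
          * |1 + z * (2 * Real.sqrt x)⁻¹|
        ≤ 2 * |1 + z * (2 * Real.sqrt x)⁻¹| :=
          mul_le_mul_of_nonneg_right (abs_deriv_factor _) (abs_nonneg _)
      _ ≤ 2 + c * |z| := by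
          have h1 : |1 + z * (2 * Real.sqrt x)⁻¹| ≤ 1 + |z| * (2 * Real.sqrt x)⁻¹ := by
            calc |1 + z * (2 * Real.sqrt x)⁻¹| ≤ |(1:ℝ)| + |z * (2 * Real.sqrt x)⁻¹| := abs_add_le _ _
              _ = 1 + |z| * (2 * Real.sqrt x)⁻¹ := by
                  rw [abs_one, abs_mul, abs_of_pos (by positivity : (0:ℝ) < (2 * Real.sqrt x)⁻¹)]
          have h2 : (2 * Real.sqrt x)⁻¹ ≤ (Real.sqrt (l/2))⁻¹ * 2⁻¹ := by
            rw [mul_inv]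
            rw [mul_comm]
            apply mul_le_mul_of_nonneg_right _ (by norm_num)
            exact inv_anti₀ hsql2 hsx
          have h3 : |z| * (2 * Real.sqrt x)⁻¹ ≤ |z| * ((Real.sqrt (l/2))⁻¹ * 2⁻¹) :=
            mul_le_mul_of_nonneg_left h2 (abs_nonneg z)
          rw [hc]
          nlinarith [abs_nonneg z]
  · apply integrable_growth (C := 2 + c)
    · apply Continuous.aestronglyMeasurable
      exact continuous_const.add (continuous_const.mul continuous_abs)
    · intro z
      rw [abs_of_nonneg (by positivity : (0:ℝ) ≤ 2 + c * |z|)]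
      nlinarith [abs_nonneg z]
  · filter_upwards with z
    intro x hx
    rw [Metric.mem_ball, Real.dist_eq] at hx
    have hxpos : l/2 < x := by have h' := abs_lt.1 hx; linarith [h'.1, h'.2]
    exact hasDerivAt_inner z (lt_trans hl2 hxpos)

lemma deriv_integral_eq (l : ℝ) (hl : 0 < l) :
    ∫ z, (2 * Real.tanh (l + Real.sqrt l * z)
      * (1 - Real.tanh (l + Real.sqrt l * z) ^ 2)
      * (1 + z * (2 * Real.sqrt l)⁻¹)) * phi z
    = ∫ z, (1 - Real.tanh (l + Real.sqrt l * z) ^ 2) ^ 2 * phi z := by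
  set S := Real.sqrt l with hSdef
  have hS : 0 < S := Real.sqrt_pos.2 hl
  set w : ℝ → ℝ := fun z => 2 * Real.tanh (l + S * z) * (1 - Real.tanh (l + S * z) ^ 2) with hw
  set w' : ℝ → ℝ := fun z =>
    (2 - 6 * Real.tanh (l + S * z) ^ 2) * (1 - Real.tanh (l + S * z) ^ 2) * S with hw'
  have hcont_inner : Continuous fun z : ℝ => l + S * z :=
    continuous_const.add (continuous_const.mul continuous_id)
  have hcontT : Continuous fun z : ℝ => Real.tanh (l + S * z) := continuous_tanh'.comp hcont_inner
  have hwderiv : ∀ z, HasDerivAt w (w' z) z := by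
    intro z
    have hinner : HasDerivAt (fun z : ℝ => l + S * z) S z := by
      have := ((hasDerivAt_id z).const_mul S).const_add l
      simpa using this
    have htanh := (myHasDerivAt_tanh (l + S * z)).comp z hinner
    have h1 : HasDerivAt (fun z => 2 * Real.tanh (l + S * z))
        (2 * ((1 - Real.tanh (l + S * z) ^ 2) * S)) z := htanh.const_mul 2
    have h2 := (htanh.pow 2).const_sub 1
    have := h1.mul h2
    refine this.congr_deriv ?_
    simp only [hw', Function.comp_apply, Pi.pow_apply, pow_one]
    push_cast
    ring
  have hwcont : Continuous w := continuous_of_hasDerivAt hwderiv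
  have hw'cont : Continuous w' := by
    apply Continuous.mul _ continuous_const
    exact (continuous_const.sub (continuous_const.mul (hcontT.pow 2))).mul
      (continuous_const.sub (hcontT.pow 2))
  have hwbound : ∀ z, |w z| ≤ 2 := fun z => abs_deriv_factor _
  have hw'bound : ∀ z, |w' z| ≤ (8 * S) * (1 + |z|) := by
    intro z
    have h1 := tanh_sq_le_one (l + S * z)
    have h2 : (0:ℝ) ≤ Real.tanh (l + S * z) ^ 2 := sq_nonneg _
    rw [hw']
    rw [abs_mul, abs_mul, abs_of_pos hS]
    have e1 : |2 - 6 * Real.tanh (l + S * z) ^ 2| ≤ 8 := by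
      rw [abs_le]; constructor <;> nlinarith
    have e2 : |1 - Real.tanh (l + S * z) ^ 2| ≤ 1 := by
      rw [abs_le]; constructor <;> nlinarith
    calc |2 - 6 * Real.tanh (l + S * z) ^ 2| * |1 - Real.tanh (l + S * z) ^ 2| * S
        ≤ 8 * 1 * S := by
          apply mul_le_mul_of_nonneg_right _ hS.le
          apply mul_le_mul e1 e2 (abs_nonneg _) (by norm_num)
      _ ≤ 8 * S * (1 + |z|) := by nlinarith [abs_nonneg z, hS]
  have hstein := stein hwderiv hw'cont hwbound hw'bound
  -- integrabilities
  have int_w : Integrable (fun z => w z * phi z) :=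
    integrable_growth hwcont.aestronglyMeasurable (C := 2)
      (fun z => by nlinarith [hwbound z, abs_nonneg z, abs_nonneg (w z)])
  have int_zw : Integrable (fun z => (z * w z) * phi z) := by
    apply integrable_growth ((continuous_id'.mul hwcont).aestronglyMeasurable) (C := 2)
    intro z
    show |z * w z| ≤ 2 * (1 + |z|)
    rw [abs_mul]
    nlinarith [hwbound z, abs_nonneg z, abs_nonneg (w z),
      mul_le_mul_of_nonneg_left (hwbound z) (abs_nonneg z)]
  have int_zw' : Integrable (fun z => (2*S)⁻¹ * ((z * w z) * phi z)) := int_zw.const_mul _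
  have int_w' : Integrable (fun z => ((2*S)⁻¹ * w' z) * phi z) := by
    apply integrable_growth (Continuous.aestronglyMeasurable (continuous_const.mul hw'cont))
      (C := (2*S)⁻¹ * (8 * S))
    intro z
    show |(2*S)⁻¹ * w' z| ≤ (2*S)⁻¹ * (8 * S) * (1 + |z|)
    rw [abs_mul, abs_of_pos (by positivity : (0:ℝ) < (2*S)⁻¹)]
    have := hw'bound z
    have h8 : (0:ℝ) < (2*S)⁻¹ := by positivity
    nlinarith [abs_nonneg (w' z), abs_nonneg z]
  -- step 1: split the integral
  have split1 : ∫ z, (2 * Real.tanh (l + S * z) * (1 - Real.tanh (l + S * z) ^ 2)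
      * (1 + z * (2 * S)⁻¹)) * phi z
      = (∫ z, w z * phi z) + ∫ z, (2*S)⁻¹ * ((z * w z) * phi z) := by
    rw [← integral_add int_w int_zw']
    congr 1
    funext z
    rw [hw]
    ring
  have step2 : ∫ z, (2*S)⁻¹ * ((z * w z) * phi z) = ∫ z, ((2*S)⁻¹ * w' z) * phi z := by
    rw [integral_const_mul]
    have : ∫ z, (z * w z) * phi z = ∫ z, w' z * phi z := by
      exact hstein
    rw [this, ← integral_const_mul]
    congr 1; funext z; ring
  have int_sq : Integrable (fun z => (1 - Real.tanh (l + S * z) ^ 2) ^ 2 * phi z) := by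
    apply integrable_growth (Continuous.aestronglyMeasurable (by
      exact (continuous_const.sub (hcontT.pow 2)).pow 2)) (C := 1)
    intro z
    have h1 := tanh_sq_le_one (l + S * z)
    have h2 : (0:ℝ) ≤ Real.tanh (l + S * z) ^ 2 := sq_nonneg _
    rw [abs_of_nonneg (sq_nonneg _)]
    nlinarith [abs_nonneg z]
  have int_hodd : Integrable (fun z => hodd (l + S * z) * phi z) := by
    apply integrable_growth (Continuous.aestronglyMeasurable (by
      exact (continuous_const.mul (continuous_tanh'.comp hcont_inner)).mul
        ((continuous_const.sub (continuous_tanh'.comp hcont_inner)).pow 2) |>.mul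
        (continuous_const.add (continuous_tanh'.comp hcont_inner)))) (C := 16)
    intro z
    have h1 := abs_tanh_le_one (l + S * z)
    unfold hodd
    rw [abs_mul, abs_mul, abs_mul, abs_two, abs_pow]
    have e1 : |1 - Real.tanh (l + S * z)| ≤ 2 := by
      rw [abs_le]; constructor <;> nlinarith [abs_le.1 h1]
    have e2 : |1 + Real.tanh (l + S * z)| ≤ 2 := by
      rw [abs_le]; constructor <;> nlinarith [abs_le.1 h1]
    calc 2 * |Real.tanh (l + S * z)| * |1 - Real.tanh (l + S * z)| ^ 2 * |1 + Real.tanh (l + S * z)|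
        ≤ 2 * 1 * 2 ^ 2 * 2 := by
          gcongr
      _ ≤ 16 * (1 + |z|) := by nlinarith [abs_nonneg z]
  have step3 : (∫ z, w z * phi z) + ∫ z, ((2*S)⁻¹ * w' z) * phi z
      = (∫ z, (1 - Real.tanh (l + S * z) ^ 2) ^ 2 * phi z) + ∫ z, hodd (l + S * z) * phi z := by
    rw [← integral_add int_w int_w', ← integral_add int_sq int_hodd]
    congr 1
    funext z
    have hSne : S ≠ 0 := hS.ne'
    have hkey : (2*S)⁻¹ * w' z = (1 - 3 * Real.tanh (l + S * z) ^ 2)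
        * (1 - Real.tanh (l + S * z) ^ 2) := by
      rw [hw']
      field_simp
      ring
    rw [hw, hkey]
    unfold hodd
    ring
  rw [split1, step2, step3, odd_vanish l hl, add_zero]

lemma deriv_val_pos (l : ℝ) (hl : 0 < l) :
    0 < ∫ z, (1 - Real.tanh (l + Real.sqrt l * z) ^ 2) ^ 2 * phi z := by
  have hcont : Continuous fun z : ℝ => (1 - Real.tanh (l + Real.sqrt l * z) ^ 2) ^ 2 := by
    exact (continuous_const.sub ((continuous_tanh'.comp
      (continuous_const.add (continuous_const.mul continuous_id))).pow 2)).pow 2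
  have hint : Integrable (fun z => (1 - Real.tanh (l + Real.sqrt l * z) ^ 2) ^ 2 * phi z) := by
    apply integrable_growth hcont.aestronglyMeasurable (C := 1)
    intro z
    have h1 := tanh_sq_le_one (l + Real.sqrt l * z)
    have h2 : (0:ℝ) ≤ Real.tanh (l + Real.sqrt l * z) ^ 2 := sq_nonneg _
    rw [abs_of_nonneg (sq_nonneg _)]
    nlinarith [abs_nonneg z]
  have hpos : ∀ z : ℝ, 0 < (1 - Real.tanh (l + Real.sqrt l * z) ^ 2) ^ 2 * phi z := by
    intro z
    have h1 : Real.tanh (l + Real.sqrt l * z) ^ 2 < 1 := by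
      nlinarith [_root_.tanh_lt_one (l + Real.sqrt l * z), _root_.neg_one_lt_tanh (l + Real.sqrt l * z)]
    have h2 : (1:ℝ) - Real.tanh (l + Real.sqrt l * z) ^ 2 ≠ 0 := by nlinarith
    have : (0:ℝ) < (1 - Real.tanh (l + Real.sqrt l * z) ^ 2) ^ 2 := by positivity
    exact mul_pos this (phi_pos z)
  rw [integral_pos_iff_support_of_nonneg (fun z => (hpos z).le) hint]
  have : Function.support (fun z => (1 - Real.tanh (l + Real.sqrt l * z) ^ 2) ^ 2 * phi z)
      = Set.univ := by
    ext z
    simp only [Function.mem_support, Set.mem_univ, iff_true]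
    exact (hpos z).ne'
  rw [this]
  simp

instance : IsProbabilityMeasure stdGaussian := by
  unfold _root_.stdGaussian; infer_instance

lemma continuous_F (l : ℝ) : Continuous fun z : ℝ => Real.tanh (l + Real.sqrt l * z) ^ 2 :=
  (continuous_tanh'.comp (continuous_const.add (continuous_const.mul continuous_id))).pow 2

lemma qfun_tendsto_zero : Tendsto qfun (nhdsWithin 0 (Set.Ioi 0)) (nhds 0) := by
  have h := tendsto_integral_filter_of_dominated_convergence (μ := stdGaussian)
    (l := nhdsWithin (0:ℝ) (Set.Ioi 0))
    (F := fun l z => Real.tanh (l + Real.sqrt l * z) ^ 2) (f := fun _ => (0:ℝ))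
    (bound := fun _ => 1)
    (by filter_upwards with l; exact (continuous_F l).aestronglyMeasurable)
    (by
      filter_upwards with l
      filter_upwards with z
      rw [Real.norm_eq_abs, abs_of_nonneg (sq_nonneg _)]
      exact tanh_sq_le_one _)
    (integrable_const 1)
    (by
      filter_upwards with z
      have hc : Continuous fun l : ℝ => Real.tanh (l + Real.sqrt l * z) ^ 2 :=
        (continuous_tanh'.comp (continuous_id.add (Real.continuous_sqrt.mul continuous_const))).pow 2
      have := (hc.tendsto 0).mono_left (nhdsWithin_le_nhds (s := Set.Ioi 0))
      simpa using this)
  simp at h; exact h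

lemma qfun_tendsto_one : Tendsto qfun atTop (nhds 1) := by
  have h := tendsto_integral_filter_of_dominated_convergence (μ := stdGaussian)
    (l := (atTop : Filter ℝ))
    (F := fun l z => Real.tanh (l + Real.sqrt l * z) ^ 2) (f := fun _ => (1:ℝ))
    (bound := fun _ => 1)
    (by filter_upwards with l; exact (continuous_F l).aestronglyMeasurable)
    (by
      filter_upwards with l
      filter_upwards with z
      rw [Real.norm_eq_abs, abs_of_nonneg (sq_nonneg _)]
      exact tanh_sq_le_one _)
    (integrable_const 1)
    (by
      filter_upwards with z
      have hg : Tendsto (fun l : ℝ => l + Real.sqrt l * z) atTop atTop := by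
        apply tendsto_atTop_mono' atTop
          (eventually_atTop.2 ⟨0, fun l hl => ?_⟩)
        · have h2 : Tendsto (fun l : ℝ => l/2 - z^2/2) atTop atTop := by
            apply tendsto_atTop_add_const_right
            exact tendsto_id.atTop_div_const two_pos
          exact h2
        · have hs := Real.sqrt_nonneg l
          have hsq : Real.sqrt l ^ 2 = l := Real.sq_sqrt hl
          have h3 : Real.sqrt l * (-|z|) ≤ Real.sqrt l * z :=
            mul_le_mul_of_nonneg_left (neg_abs_le z) hs
          have h4 := sq_nonneg (Real.sqrt l - |z|)
          have h5 := sq_abs z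
          nlinarith
      have := ((continuous_pow 2).tendsto (1:ℝ)).comp (tendsto_tanh_atTop.comp hg)
      simpa [Function.comp_def] using this)
  simp at h; exact h


/-- `q` is continuous and strictly increasing on `(0,∞)`, with `q(λ) → 0` as `λ → 0⁺`
and `q(λ) → 1` as `λ → ∞`. -/
theorem qfun_continuous_strictMono_limits :
    ContinuousOn qfun (Set.Ioi (0 : ℝ)) ∧
    StrictMonoOn qfun (Set.Ioi (0 : ℝ)) ∧
    Tendsto qfun (nhdsWithin 0 (Set.Ioi 0)) (nhds 0) ∧
    Tendsto qfun atTop (nhds 1) := by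
  have hcont : ContinuousOn qfun (Set.Ioi (0 : ℝ)) := fun l hl =>
    ((hasDerivAt_qfun l hl).continuousAt).continuousWithinAt
  refine ⟨hcont, ?_, qfun_tendsto_zero, qfun_tendsto_one⟩
  apply strictMonoOn_of_deriv_pos (convex_Ioi 0) hcont
  intro x hx
  rw [interior_Ioi] at hx
  rw [(hasDerivAt_qfun x hx).deriv, deriv_integral_eq x hx]
  exact deriv_val_pos x hx
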